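/- arXiv:2201.05688 — 2 statements merged into one kernel-verified Lean document; each statement's English description precedes it below -/
import Mathlib

section
/- Let (Re, S, V) be a vector S-metric space over an Archimedean vector lattice V, and let ⟨h_n⟩ be a sequence in Re such that S(h_n, h_n, h_{n+1}) ≤ α · S(h_{n-1}, h_{n-1}, h_n) for all n ≥ 1, where α ∈ [0, 1). Then ⟨h_n⟩ is a V-Cauchy sequence, i.e., there exists a sequence ⟨μ_n⟩ in V with μ_n ↓ 0 and S(h_n, h_n, h_{n+q}) ≤ μ_n for all n and q. -/
/-- A sequence `μ` in `V` decreases to zero: it is antitone with infimum 0. -/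
def DownToZero {V : Type*} [Lattice V] [AddCommGroup V] (μ : ℕ → V) : Prop :=
  Antitone μ ∧ IsGLB (Set.range μ) 0

/-- `V` is Archimedean: `inf {(1/m) v} = 0` for every `v ≥ 0`. -/
def VArchimedean (V : Type*) [Lattice V] [AddCommGroup V] [Module ℝ V] : Prop :=
  ∀ v : V, 0 ≤ v → IsGLB (Set.range fun m : ℕ => ((m : ℝ) + 1)⁻¹ • v) 0

/-- Lemma 2.1: a sequence satisfying the contraction condition is V-Cauchy. -/
theorem contractive_seq_is_V_Cauchy {Re V : Type*}
    [Lattice V] [AddCommGroup V] [CovariantClass V V (· + ·) (· ≤ ·)]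
    [Module ℝ V] [PosSMulMono ℝ V]
    (S : Re → Re → Re → V)
    (hnonneg : ∀ a b c, 0 ≤ S a b c)
    (hzero : ∀ a b c, S a b c = 0 ↔ a = b ∧ b = c)
    (hrect : ∀ a b c d, S a b c ≤ S a a d + S b b d + S c c d)
    (hArch : VArchimedean V)
    (h : ℕ → Re) (α : ℝ) (hα0 : 0 ≤ α) (hα1 : α < 1)
    (hcontr : ∀ n : ℕ,
      S (h (n + 1)) (h (n + 1)) (h (n + 2)) ≤ α • S (h n) (h n) (h (n + 1))) :
    ∃ μ : ℕ → V, DownToZero μ ∧ ∀ n q : ℕ, S (h n) (h n) (h (n + q)) ≤ μ n := by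
  set d0 : V := S (h 0) (h 0) (h 1) with hd0
  have hd0nn : 0 ≤ d0 := hnonneg _ _ _
  have h1α : (0:ℝ) < 1 - α := by linarith
  set c : ℝ := 2 / (1 - α) with hc
  have hcpos : (0:ℝ) < c := by positivity
  -- scalar monotonicity on a nonneg vector
  have smulv : ∀ (r s : ℝ), r ≤ s → ∀ v : V, 0 ≤ v → r • v ≤ s • v := by
    intro r s hrs v hv
    rw [← sub_nonneg, ← sub_smul]
    have := smul_le_smul_of_nonneg_left hv (by linarith : (0:ℝ) ≤ s - r)
    simpa using this
  have smul0 : ∀ (r : ℝ), 0 ≤ r → ∀ v : V, 0 ≤ v → 0 ≤ r • v := by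
    intro r hr v hv
    have := smulv 0 r hr v hv
    simpa using this
  -- symmetry
  have hsym : ∀ a b : Re, S a a b ≤ S b b a := by
    intro a b
    have haa : S a a a = 0 := (hzero a a a).mpr ⟨rfl, rfl⟩
    have := hrect a a b a
    simpa [haa] using this
  -- geometric bound on consecutive distances
  have hD : ∀ n, S (h n) (h n) (h (n + 1)) ≤ α ^ n • d0 := by
    intro n
    induction n with
    | zero => simp [hd0]
    | succ n ih =>
      calc S (h (n + 1)) (h (n + 1)) (h (n + 2)) ≤ α • S (h n) (h n) (h (n + 1)) :=
            hcontr n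
        _ ≤ α • (α ^ n • d0) := smul_le_smul_of_nonneg_left ih hα0
        _ = α ^ (n + 1) • d0 := by rw [smul_smul]; ring_nf
  set μ : ℕ → V := fun n => (c * α ^ n) • d0 with hμ
  have hμnn : ∀ n, 0 ≤ μ n := fun n =>
    smul0 _ (by positivity) _ hd0nn
  -- main Cauchy estimate
  have hmain : ∀ q n : ℕ, S (h n) (h n) (h (n + q)) ≤ μ n := by
    intro q
    induction q with
    | zero =>
      intro n
      have : S (h n) (h n) (h (n + 0)) = 0 := (hzero _ _ _).mpr ⟨rfl, by simp⟩
      rw [this]; exact hμnn n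
    | succ q ih =>
      intro n
      have step := hrect (h n) (h n) (h (n + (q + 1))) (h (n + 1))
      have htail : S (h (n + (q + 1))) (h (n + (q + 1))) (h (n + 1)) ≤ μ (n + 1) := by
        have h2 := hsym (h (n + (q + 1))) (h (n + 1))
        have h3 : S (h (n + 1)) (h (n + 1)) (h ((n + 1) + q)) ≤ μ (n + 1) := ih (n + 1)
        have he : (n + 1) + q = n + (q + 1) := by omega
        rw [he] at h3
        exact le_trans h2 h3
      have hDn := hD n
      have hb : S (h n) (h n) (h (n + (q + 1))) ≤
          α ^ n • d0 + α ^ n • d0 + (c * α ^ (n + 1)) • d0 :=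
        le_trans step (add_le_add (add_le_add hDn hDn) htail)
      refine le_trans hb (le_of_eq ?_)
      show (α ^ n • d0 + α ^ n • d0 + (c * α ^ (n + 1)) • d0) = (c * α ^ n) • d0
      rw [← add_smul, ← add_smul]
      congr 1
      simp only [hc]
      have hne : (1 : ℝ) - α ≠ 0 := ne_of_gt h1α
      field_simp
      ring
  refine ⟨μ, ⟨?_, ?_⟩, fun n q => hmain q n⟩
  · -- antitone
    apply antitone_nat_of_succ_le
    intro n
    apply smulv _ _ ?_ _ hd0nn
    have : α ^ (n + 1) ≤ α ^ n := pow_le_pow_of_le_one hα0 hα1.le (by omega)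
    nlinarith
  · -- IsGLB
    constructor
    · rintro x ⟨n, rfl⟩
      exact hμnn n
    · intro b hb
      have harch := hArch (c • d0) (smul0 c hcpos.le _ hd0nn)
      apply harch.2
      rintro x ⟨m, rfl⟩
      have hε : (0:ℝ) < ((m : ℝ) + 1)⁻¹ := by positivity
      obtain ⟨n, hn⟩ := exists_pow_lt_of_lt_one hε hα1
      have hb' : b ≤ μ n := hb ⟨n, rfl⟩
      refine le_trans hb' ?_
      have hle : μ n ≤ (((m : ℝ) + 1)⁻¹ * c) • d0 := by
        apply smulv _ _ ?_ _ hd0nn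
        nlinarith
      simpa [mul_smul] using hle
end

section
/- Let (Re, S, V) be a vector S-metric space and suppose f, K : Re → Re satisfy: for all x, y ∈ Re, S(fx, fx, fy) ≤ q·u for some u ∈ {S(Kx,Kx,Ky), S(Kx,Kx,fx), S(Ky,Ky,fy), S(Kx,Kx,fy), S(Ky,Ky,fx)}, with q ∈ [0,1). If p and p' are both common fixed points of f and K (i.e., fp = Kp = p and fp' = Kp' = p'), then p = p'. -/
/-- Uniqueness of common fixed points under the five-term contractive condition. -/
theorem common_fixed_point_unique {Re V : Type*}
    [Lattice V] [AddCommGroup V] [CovariantClass V V (· + ·) (· ≤ ·)]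
    [Module ℝ V] [PosSMulMono ℝ V]
    (S : Re → Re → Re → V)
    (hnonneg : ∀ a b c, 0 ≤ S a b c)
    (hzero : ∀ a b c, S a b c = 0 ↔ a = b ∧ b = c)
    (hrect : ∀ a b c d, S a b c ≤ S a a d + S b b d + S c c d)
    (f K : Re → Re)
    (q : ℝ) (hq0 : 0 ≤ q) (hq1 : q < 1)
    (hcontr : ∀ x y : Re, ∃ u ∈ ({S (K x) (K x) (K y), S (K x) (K x) (f x),
        S (K y) (K y) (f y), S (K x) (K x) (f y), S (K y) (K y) (f x)} : Set V),
      S (f x) (f x) (f y) ≤ q • u)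
    (p p' : Re)
    (hp : f p = p ∧ K p = p) (hp' : f p' = p' ∧ K p' = p') :
    p = p' := by
  obtain ⟨hfp, hKp⟩ := hp
  obtain ⟨hfp', hKp'⟩ := hp'
  have hSxx : ∀ x : Re, S x x x = 0 := fun x => (hzero x x x).mpr ⟨rfl, rfl⟩
  have hsym : ∀ x y : Re, S x x y ≤ S y y x := by
    intro x y
    have := hrect x x y x
    simpa [hSxx] using this
  have hsymm : ∀ x y : Re, S x x y = S y y x := fun x y =>
    le_antisymm (hsym x y) (hsym y x)
  have key : S p p p' ≤ q • S p p p' := by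
    obtain ⟨u, hu, hle⟩ := hcontr p p'
    simp only [hfp, hfp', hKp, hKp'] at hu hle
    simp only [Set.mem_insert_iff, Set.mem_singleton_iff] at hu
    rcases hu with h | h | h | h | h
    · rw [h] at hle; exact hle
    · rw [h, hSxx] at hle
      calc S p p p' ≤ q • 0 := hle
        _ ≤ q • S p p p' := smul_le_smul_of_nonneg_left (hnonneg _ _ _) hq0
    · rw [h, hSxx] at hle
      calc S p p p' ≤ q • 0 := hle
        _ ≤ q • S p p p' := smul_le_smul_of_nonneg_left (hnonneg _ _ _) hq0
    · rw [h] at hle; exact hle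
    · rw [h, hsymm p' p] at hle
      exact hle
  have hzero' : S p p p' = 0 := by
    have h1 : (1 - q) • S p p p' ≤ 0 := by
      have := sub_nonpos.mpr key
      calc (1 - q) • S p p p' = S p p p' - q • S p p p' := by
            rw [sub_smul, one_smul]
        _ ≤ 0 := this
    have h2 : (0:V) ≤ (1 - q) • S p p p' :=
      smul_nonneg (by linarith) (hnonneg _ _ _)
    have : (1 - q) • S p p p' = 0 := le_antisymm h1 h2
    rcases smul_eq_zero.mp this with h | h
    · exact absurd h (by intro h'; linarith [sub_eq_zero.mp h'])
    · exact h
  exact ((hzero p p p').mp hzero').2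
end
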